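/- Let n ≥ 2, let μ be a finite Borel measure on ℝⁿ, and let g : ℝⁿ → ℝ satisfy g(x) = ∫_{ℝⁿ} cos⟨ξ, x⟩ dμ(ξ) and ∫_{ℝⁿ} sin⟨ξ, x⟩ dμ(ξ) = 0 for all x ∈ ℝⁿ. If Ω ⊆ ℝⁿ is a bounded measurable set with ∬_{Ω×Ω} g(x−y) dx dy = 0, then χ̂_Ω(ξ) = 0 for every ξ in the topological support of μ. In particular, if Ω is nonempty and open then 0 does not lie in the support of μ (since χ̂_Ω(0) equals the Lebesgue measure of Ω, which is positive). -/

import Mathlib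

open MeasureTheory Metric
open scoped RealInnerProductSpace
set_option maxHeartbeats 1000000 in

theorem stmt_15 {n : ℕ} (hn : 2 ≤ n) (μ : Measure (EuclideanSpace ℝ (Fin n)))
    [IsFiniteMeasure μ] (g : EuclideanSpace ℝ (Fin n) → ℝ)
    (hg : ∀ x, g x = ∫ ξ, Real.cos ⟪ξ, x⟫ ∂μ)
    (hsin : ∀ x, (∫ ξ, Real.sin ⟪ξ, x⟫ ∂μ) = 0)
    (Ω : Set (EuclideanSpace ℝ (Fin n))) (hmeas : MeasurableSet Ω)
    (hbdd : Bornology.IsBounded Ω)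
    (hF : (∫ x in Ω, ∫ y in Ω, g (x - y)) = 0) :
    (∀ ξ : EuclideanSpace ℝ (Fin n),
      (∀ U : Set (EuclideanSpace ℝ (Fin n)), IsOpen U → ξ ∈ U → 0 < μ U) →
        (∫ x in Ω, Complex.exp ((⟪ξ, x⟫ : ℂ) * Complex.I)) = 0) ∧
    (Ω.Nonempty → IsOpen Ω →
      ¬ ∀ U : Set (EuclideanSpace ℝ (Fin n)), IsOpen U →
        (0 : EuclideanSpace ℝ (Fin n)) ∈ U → 0 < μ U) := by
  have hνtop : volume Ω < ⊤ := hbdd.measure_lt_top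
  haveI : IsFiniteMeasure (volume.restrict Ω) :=
    ⟨by rwa [Measure.restrict_apply_univ]⟩
  set M : ℝ := (volume Ω).toReal with hM
  -- integrability of bounded continuous real functions on Ω
  have bint : ∀ (f : EuclideanSpace ℝ (Fin n) → ℝ), Continuous f →
      (∀ x, ‖f x‖ ≤ 1) → Integrable f (volume.restrict Ω) := fun f hf hb =>
    (integrable_const 1).mono' hf.aestronglyMeasurable (Filter.Eventually.of_forall hb)
  set F : EuclideanSpace ℝ (Fin n) → ℂ :=
    fun ξ => ∫ x in Ω, Complex.exp ((⟪ξ, x⟫ : ℂ) * Complex.I) with hFdef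
  set C : EuclideanSpace ℝ (Fin n) → ℝ := fun ξ => ∫ x in Ω, Real.cos ⟪ξ, x⟫ with hCdef
  set S : EuclideanSpace ℝ (Fin n) → ℝ := fun ξ => ∫ x in Ω, Real.sin ⟪ξ, x⟫ with hSdef
  have hcos_cont : ∀ ξ, Continuous fun x : EuclideanSpace ℝ (Fin n) => Real.cos ⟪ξ, x⟫ :=
    fun ξ => Real.continuous_cos.comp (continuous_const.inner continuous_id)
  have hsin_cont : ∀ ξ, Continuous fun x : EuclideanSpace ℝ (Fin n) => Real.sin ⟪ξ, x⟫ :=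
    fun ξ => Real.continuous_sin.comp (continuous_const.inner continuous_id)
  have hcosb : ∀ (θ : ℝ), ‖Real.cos θ‖ ≤ 1 := fun θ => by
    rw [Real.norm_eq_abs]; exact Real.abs_cos_le_one θ
  have hsinb : ∀ (θ : ℝ), ‖Real.sin θ‖ ≤ 1 := fun θ => by
    rw [Real.norm_eq_abs]; exact Real.abs_sin_le_one θ
  have icos : ∀ ξ, Integrable (fun x => Real.cos ⟪ξ, x⟫) (volume.restrict Ω) :=
    fun ξ => bint _ (hcos_cont ξ) (fun x => hcosb _)
  have isin : ∀ ξ, Integrable (fun x => Real.sin ⟪ξ, x⟫) (volume.restrict Ω) :=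
    fun ξ => bint _ (hsin_cont ξ) (fun x => hsinb _)
  -- F ξ = C ξ + S ξ * I
  have hFeq : ∀ ξ, F ξ = (C ξ : ℂ) + (S ξ : ℂ) * Complex.I := by
    intro ξ
    have h1 : ∀ x : EuclideanSpace ℝ (Fin n),
        Complex.exp ((⟪ξ, x⟫ : ℂ) * Complex.I)
          = ((Real.cos ⟪ξ, x⟫ : ℝ) : ℂ) + ((Real.sin ⟪ξ, x⟫ : ℝ) : ℂ) * Complex.I := by
      intro x
      rw [Complex.exp_mul_I, Complex.ofReal_cos, Complex.ofReal_sin]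
    have i1 : Integrable (fun x : EuclideanSpace ℝ (Fin n) =>
        ((Real.cos ⟪ξ, x⟫ : ℝ) : ℂ)) (volume.restrict Ω) := (icos ξ).ofReal
    have i2 : Integrable (fun x : EuclideanSpace ℝ (Fin n) =>
        ((Real.sin ⟪ξ, x⟫ : ℝ) : ℂ) * Complex.I) (volume.restrict Ω) :=
      ((isin ξ).ofReal).mul_const _
    rw [hFdef]
    simp only [h1]
    rw [integral_add i1 i2, integral_mul_const]
    have e1 : (∫ x in Ω, ((Real.cos ⟪ξ, x⟫ : ℝ) : ℂ)) = ((C ξ : ℝ) : ℂ) := integral_ofReal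
    have e2 : (∫ x in Ω, ((Real.sin ⟪ξ, x⟫ : ℝ) : ℂ)) = ((S ξ : ℝ) : ℂ) := integral_ofReal
    rw [e1, e2]
  -- norm squared
  have hnorm : ∀ ξ, ‖F ξ‖ ^ 2 = C ξ ^ 2 + S ξ ^ 2 := by
    intro ξ
    rw [hFeq ξ, Complex.sq_norm, Complex.normSq_add_mul_I]
  -- continuity of F
  have hj : Continuous fun p : EuclideanSpace ℝ (Fin n) × EuclideanSpace ℝ (Fin n) =>
      Complex.exp ((⟪p.1, p.2⟫ : ℂ) * Complex.I) :=
    Complex.continuous_exp.comp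
      ((Complex.continuous_ofReal.comp continuous_inner).mul continuous_const)
  have hexpb : ∀ (θ : ℝ), ‖Complex.exp ((θ : ℂ) * Complex.I)‖ = 1 := fun θ => by
    rw [Complex.norm_exp_ofReal_mul_I]
  have hFcont : Continuous F := by
    rw [hFdef]
    apply continuous_of_dominated (bound := fun _ => (1 : ℝ))
    · intro ξ
      exact ((hj.comp (Continuous.prodMk_right ξ))).aestronglyMeasurable
    · intro ξ
      exact Filter.Eventually.of_forall fun x => le_of_eq (hexpb _)
    · exact integrable_const 1
    · exact Filter.Eventually.of_forall fun x =>
        Complex.continuous_exp.comp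
          (((Complex.continuous_ofReal.comp
            ((continuous_id.inner continuous_const)))).mul continuous_const)
  have hCcont : Continuous C := by
    have : C = fun ξ => (F ξ).re := by
      funext ξ; rw [hFeq ξ]; simp
    rw [this]; exact Complex.continuous_re.comp hFcont
  have hScont : Continuous S := by
    have : S = fun ξ => (F ξ).im := by
      funext ξ; rw [hFeq ξ]; simp
    rw [this]; exact Complex.continuous_im.comp hFcont
  -- bounds on C, S
  have hCb : ∀ ξ, |C ξ| ≤ M := by
    intro ξ
    have := norm_integral_le_of_norm_le_const (μ := volume.restrict Ω)
      (f := fun x => Real.cos ⟪ξ, x⟫) (C := 1)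
      (Filter.Eventually.of_forall fun x => hcosb _)
    simpa [Real.norm_eq_abs, Measure.restrict_apply_univ, measureReal_def] using this
  have hSb : ∀ ξ, |S ξ| ≤ M := by
    intro ξ
    have := norm_integral_le_of_norm_le_const (μ := volume.restrict Ω)
      (f := fun x => Real.sin ⟪ξ, x⟫) (C := 1)
      (Filter.Eventually.of_forall fun x => hsinb _)
    simpa [Real.norm_eq_abs, Measure.restrict_apply_univ, measureReal_def] using this
  -- Fubini step 1 (inner swap with μ, for fixed x)
  have swap1 : ∀ x : EuclideanSpace ℝ (Fin n),
      (∫ y in Ω, ∫ ξ, Real.cos ⟪ξ, x - y⟫ ∂μ)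
        = ∫ ξ, (∫ y in Ω, Real.cos ⟪ξ, x - y⟫) ∂μ := by
    intro x
    apply integral_integral_swap
    apply (integrable_const (1 : ℝ)).mono'
    · exact (Real.continuous_cos.comp
        (continuous_snd.inner (continuous_const.sub continuous_fst))).aestronglyMeasurable
    · exact Filter.Eventually.of_forall fun p => hcosb _
  -- continuity of the doubly-parametrized inner integral
  have hGcont : Continuous fun p : EuclideanSpace ℝ (Fin n) × EuclideanSpace ℝ (Fin n) =>
      ∫ y in Ω, Real.cos ⟪p.2, p.1 - y⟫ := by
    apply continuous_of_dominated (bound := fun _ => (1 : ℝ))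
    · intro p
      exact (Real.continuous_cos.comp
        (continuous_const.inner (continuous_const.sub continuous_id))).aestronglyMeasurable
    · intro p
      exact Filter.Eventually.of_forall fun y => hcosb _
    · exact integrable_const 1
    · refine Filter.Eventually.of_forall fun y => ?_
      exact Real.continuous_cos.comp
        (continuous_snd.inner (continuous_fst.sub continuous_const))
  -- Fubini step 2 (outer swap)
  have swap2 : (∫ x in Ω, ∫ ξ, (∫ y in Ω, Real.cos ⟪ξ, x - y⟫) ∂μ)
      = ∫ ξ, (∫ x in Ω, ∫ y in Ω, Real.cos ⟪ξ, x - y⟫) ∂μ := by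
    apply integral_integral_swap
    apply (integrable_const M).mono'
    · exact hGcont.aestronglyMeasurable
    · refine Filter.Eventually.of_forall fun p => ?_
      have := norm_integral_le_of_norm_le_const (μ := volume.restrict Ω)
        (f := fun y => Real.cos ⟪p.2, p.1 - y⟫) (C := 1)
        (Filter.Eventually.of_forall fun y => hcosb _)
      simpa [Measure.restrict_apply_univ, measureReal_def, Function.uncurry] using this
  -- inner double integral computation
  have inner_eq : ∀ ξ, (∫ x in Ω, ∫ y in Ω, Real.cos ⟪ξ, x - y⟫) = C ξ ^ 2 + S ξ ^ 2 := by
    intro ξ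
    have hxy : ∀ x y : EuclideanSpace ℝ (Fin n),
        Real.cos ⟪ξ, x - y⟫
          = Real.cos ⟪ξ, x⟫ * Real.cos ⟪ξ, y⟫ + Real.sin ⟪ξ, x⟫ * Real.sin ⟪ξ, y⟫ := by
      intro x y; rw [inner_sub_right, Real.cos_sub]
    simp only [hxy]
    have h2 : ∀ x : EuclideanSpace ℝ (Fin n),
        (∫ y in Ω, (Real.cos ⟪ξ, x⟫ * Real.cos ⟪ξ, y⟫ + Real.sin ⟪ξ, x⟫ * Real.sin ⟪ξ, y⟫))
          = Real.cos ⟪ξ, x⟫ * C ξ + Real.sin ⟪ξ, x⟫ * S ξ := by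
      intro x
      rw [integral_add ((icos ξ).const_mul _) ((isin ξ).const_mul _),
        integral_const_mul, integral_const_mul]
    simp only [h2]
    rw [integral_add ((icos ξ).mul_const _) ((isin ξ).mul_const _),
      integral_mul_const, integral_mul_const]
    ring
  -- key identity
  have key : ∫ ξ, (C ξ ^ 2 + S ξ ^ 2) ∂μ = 0 := by
    have e1 : (∫ x in Ω, ∫ y in Ω, g (x - y)) = ∫ ξ, (C ξ ^ 2 + S ξ ^ 2) ∂μ := by
      simp only [hg]
      simp only [swap1]
      rw [swap2]
      simp only [inner_eq]
    rw [← e1]; exact hF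
  -- a.e. vanishing
  have hnn : 0 ≤ fun ξ : EuclideanSpace ℝ (Fin n) => C ξ ^ 2 + S ξ ^ 2 := by
    intro ξ; positivity
  have hφint : Integrable (fun ξ => C ξ ^ 2 + S ξ ^ 2) μ := by
    apply (integrable_const (M ^ 2 + M ^ 2)).mono'
      ((hCcont.pow 2).add (hScont.pow 2)).aestronglyMeasurable
    refine Filter.Eventually.of_forall fun ξ => ?_
    have h1 := hCb ξ
    have h2 := hSb ξ
    have h3 := abs_nonneg (C ξ)
    have h4 := abs_nonneg (S ξ)
    simp only [Pi.add_apply, Pi.pow_apply]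
    rw [Real.norm_eq_abs, abs_of_nonneg (by positivity)]
    nlinarith [sq_abs (C ξ), sq_abs (S ξ)]
  have hae := (integral_eq_zero_iff_of_nonneg hnn hφint).mp key
  rw [Filter.EventuallyEq, ae_iff] at hae
  have μnull : μ {ζ | F ζ ≠ 0} = 0 := by
    have hset : {a | ¬ (fun ξ => C ξ ^ 2 + S ξ ^ 2) a = (0 : EuclideanSpace ℝ (Fin n) → ℝ) a}
        = {ζ | F ζ ≠ 0} := by
      ext ζ
      simp only [Set.mem_setOf_eq, Pi.zero_apply, ← hnorm ζ, ne_eq]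
      rw [pow_eq_zero_iff (two_ne_zero), norm_eq_zero]
    rw [← hset]; exact hae
  have hzero : ∀ ξ : EuclideanSpace ℝ (Fin n),
      (∀ U : Set (EuclideanSpace ℝ (Fin n)), IsOpen U → ξ ∈ U → 0 < μ U) → F ξ = 0 := by
    intro ξ hξ
    by_contra hne0
    have hU : IsOpen {ζ | F ζ ≠ 0} := by
      have : {ζ | F ζ ≠ 0} = F ⁻¹' ({0}ᶜ) := rfl
      rw [this]
      exact isOpen_compl_singleton.preimage hFcont
    have := hξ _ hU hne0
    rw [μnull] at this
    exact lt_irrefl 0 this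
  refine ⟨hzero, fun hne hopen hall => ?_⟩
  have h0 : F 0 = 0 := hzero 0 hall
  have hF0 : F 0 = ((volume Ω).toReal : ℂ) := by
    rw [hFdef]
    have : ∀ x : EuclideanSpace ℝ (Fin n),
        Complex.exp ((⟪(0 : EuclideanSpace ℝ (Fin n)), x⟫ : ℂ) * Complex.I) = 1 := by
      intro x
      simp [inner_zero_left]
    simp only [this]
    rw [integral_const]
    simp [Measure.restrict_apply_univ, measureReal_def]
  have hpos : 0 < volume Ω := hopen.measure_pos volume hne
  have : (volume Ω).toReal ≠ 0 := ne_of_gt (ENNReal.toReal_pos (ne_of_gt hpos) hνtop.ne)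
  rw [hF0] at h0
  exact this (by exact_mod_cast h0)
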